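/- Let w₀ : (0,∞) → (0,∞) be essentially constant over dyadic intervals with constant β. Then the radial measure dμ = w₀(|x|)dx on ℝⁿ is uniformly n-micro-doubling for all sufficiently large n: there exist N and K depending only on β so that for n ≥ N, all x ∈ ℝⁿ and R > 0, μ(B(x,(1+1/n)R)) ≤ K μ(B(x,R)). -/

import Mathlib

open MeasureTheory Metric Set
open scoped ENNReal

section Aux

variable (w₀ : ℝ → ℝ) (β : ℝ)

/-- Iterated dyadic comparison: if `s ≤ t ≤ 2^k s`, then `w₀ s` and `w₀ t` are comparable
within a factor `β^k`. -/
lemma aux_dyad_chain (hw : ∀ r : ℝ, 0 < r → 0 < w₀ r) (hβ : 1 ≤ β)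
    (hdyad : ∀ R : ℝ, 0 < R → ∀ s ∈ Set.Icc R (2 * R), ∀ t ∈ Set.Icc R (2 * R),
      w₀ s ≤ β * w₀ t) :
    ∀ k : ℕ, ∀ s t : ℝ, 0 < s → s ≤ t → t ≤ 2 ^ k * s →
      w₀ t ≤ β ^ k * w₀ s ∧ w₀ s ≤ β ^ k * w₀ t := by
  intro k
  induction k with
  | zero =>
    intro s t hs hst h
    have : t = s := le_antisymm (by simpa using h) hst
    subst this; simp
  | succ k ih =>
    intro s t hs hst h
    have hβ0 : (0:ℝ) ≤ β := by linarith
    have hβk : (0:ℝ) ≤ β ^ k := pow_nonneg hβ0 k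
    have h1k : (1:ℝ) ≤ 2 ^ k := one_le_pow₀ (by norm_num)
    by_cases hc : t ≤ 2 ^ k * s
    · obtain ⟨h1, h2⟩ := ih s t hs hst hc
      have hmono : β ^ k ≤ β ^ (k+1) := pow_le_pow_right₀ hβ (Nat.le_succ k)
      have hws : 0 < w₀ s := hw s hs
      have hwt : 0 < w₀ t := hw t (hs.trans_le hst)
      constructor
      · exact h1.trans (mul_le_mul_of_nonneg_right hmono hws.le)
      · exact h2.trans (mul_le_mul_of_nonneg_right hmono hwt.le)
    · push_neg at hc
      have h2ks : 0 < 2 ^ k * s := by positivity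
      have hmid := ih s (2 ^ k * s) hs (by nlinarith) le_rfl
      have ht2 : t ≤ 2 * (2 ^ k * s) := by
        have : (2:ℝ) ^ (k+1) = 2 ^ k * 2 := by rw [pow_succ]
        rw [this] at h; linarith
      have hd1 : w₀ t ≤ β * w₀ (2 ^ k * s) :=
        hdyad (2 ^ k * s) h2ks t ⟨hc.le, ht2⟩ (2 ^ k * s) ⟨le_rfl, by linarith⟩
      have hd2 : w₀ (2 ^ k * s) ≤ β * w₀ t :=
        hdyad (2 ^ k * s) h2ks (2 ^ k * s) ⟨le_rfl, by linarith⟩ t ⟨hc.le, ht2⟩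
      constructor
      · calc w₀ t ≤ β * w₀ (2 ^ k * s) := hd1
          _ ≤ β * (β ^ k * w₀ s) := mul_le_mul_of_nonneg_left hmid.1 hβ0
          _ = β ^ (k+1) * w₀ s := by ring
      · calc w₀ s ≤ β ^ k * w₀ (2 ^ k * s) := hmid.2
          _ ≤ β ^ k * (β * w₀ t) := mul_le_mul_of_nonneg_left hd2 hβk
          _ = β ^ (k+1) * w₀ t := by ring

/-- Two points in a common interval `[a, 2^k a]` have comparable weights within `β^(2k)`. -/
lemma aux_dyad_icc (hw : ∀ r : ℝ, 0 < r → 0 < w₀ r) (hβ : 1 ≤ β)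
    (hdyad : ∀ R : ℝ, 0 < R → ∀ s ∈ Set.Icc R (2 * R), ∀ t ∈ Set.Icc R (2 * R),
      w₀ s ≤ β * w₀ t)
    (k : ℕ) (a s t : ℝ) (ha : 0 < a) (hs : s ∈ Set.Icc a (2 ^ k * a))
    (ht : t ∈ Set.Icc a (2 ^ k * a)) :
    w₀ s ≤ β ^ (2 * k) * w₀ t := by
  have hβ0 : (0:ℝ) ≤ β := by linarith
  obtain ⟨h1, -⟩ := aux_dyad_chain w₀ β hw hβ hdyad k a s ha hs.1 hs.2
  obtain ⟨-, h4⟩ := aux_dyad_chain w₀ β hw hβ hdyad k a t ha ht.1 ht.2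
  calc w₀ s ≤ β ^ k * w₀ a := h1
    _ ≤ β ^ k * (β ^ k * w₀ t) := mul_le_mul_of_nonneg_left h4 (pow_nonneg hβ0 k)
    _ = β ^ (2 * k) * w₀ t := by ring

end Aux

/-- The dilation `z ↦ x + c • (z - x)` as a measurable equivalence. -/
noncomputable def auxDil {n : ℕ} (x : EuclideanSpace ℝ (Fin n)) (c : ℝ) (hc : c ≠ 0) :
    EuclideanSpace ℝ (Fin n) ≃ᵐ EuclideanSpace ℝ (Fin n) where
  toFun z := x + c • (z - x)
  invFun y := x + c⁻¹ • (y - x)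
  left_inv z := by simp [smul_smul, inv_mul_cancel₀ hc]
  right_inv y := by simp [smul_smul, mul_inv_cancel₀ hc]
  measurable_toFun :=
    (continuous_const.add ((continuous_id.sub continuous_const).const_smul c)).measurable
  measurable_invFun :=
    (continuous_const.add ((continuous_id.sub continuous_const).const_smul c⁻¹)).measurable

lemma auxDil_apply {n : ℕ} (x : EuclideanSpace ℝ (Fin n)) (c : ℝ) (hc : c ≠ 0)
    (z : EuclideanSpace ℝ (Fin n)) : auxDil x c hc z = x + c • (z - x) := rfl

lemma aux_map_dil {n : ℕ} (x : EuclideanSpace ℝ (Fin n)) (c : ℝ) (hc : 0 < c) :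
    Measure.map (auxDil x c hc.ne') volume = ENNReal.ofReal (c⁻¹ ^ n) • volume := by
  ext S hS
  rw [Measure.map_apply (auxDil x c hc.ne').measurable hS, Measure.smul_apply, smul_eq_mul]
  have him : (auxDil x c hc.ne') ⁻¹' S = AffineMap.homothety x c⁻¹ '' S := by
    have h1 : (auxDil x c hc.ne') ⁻¹' S = (auxDil x c hc.ne').symm '' S := by
      rw [← MeasurableEquiv.image_symm]
    rw [h1]
    apply Set.image_congr
    intro y _
    show x + c⁻¹ • (y - x) = AffineMap.homothety x c⁻¹ y
    rw [AffineMap.homothety_apply]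
    simp [vsub_eq_sub, vadd_eq_add]; abel
  rw [him, Measure.addHaar_image_homothety, finrank_euclideanSpace_fin,
    abs_of_nonneg (by positivity : (0:ℝ) ≤ c⁻¹ ^ n)]

/-- Change of variables for the dilation `z ↦ x + c • (z - x)`. -/
lemma aux_cov {n : ℕ} (x : EuclideanSpace ℝ (Fin n)) (c : ℝ) (hc : 0 < c)
    {A : Set (EuclideanSpace ℝ (Fin n))} (hA : MeasurableSet A)
    (g : EuclideanSpace ℝ (Fin n) → ℝ≥0∞) :
    ∫⁻ z in A, g (x + c • (z - x)) ∂volume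
      = ENNReal.ofReal (c⁻¹ ^ n) * ∫⁻ y in (fun z => x + c • (z - x)) '' A, g y ∂volume := by
  have e := auxDil x c hc.ne'
  have himg : (fun z => x + c • (z - x)) '' A = (auxDil x c hc.ne') '' A := rfl
  have hAimg : MeasurableSet ((auxDil x c hc.ne') '' A) :=
    (auxDil x c hc.ne').measurableSet_image.mpr hA
  have hpre : (auxDil x c hc.ne') ⁻¹' ((auxDil x c hc.ne') '' A) = A :=
    Set.preimage_image_eq A (auxDil x c hc.ne').injective
  calc ∫⁻ z in A, g (x + c • (z - x)) ∂volume
      = ∫⁻ z, g ((auxDil x c hc.ne') z) ∂(volume.restrict A) := rfl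
    _ = ∫⁻ y, g y ∂(Measure.map (auxDil x c hc.ne') (volume.restrict A)) :=
        (lintegral_map_equiv g (auxDil x c hc.ne')).symm
    _ = ∫⁻ y, g y ∂((Measure.map (auxDil x c hc.ne') volume).restrict
          ((auxDil x c hc.ne') '' A)) := by
        rw [Measure.restrict_map (auxDil x c hc.ne').measurable hAimg, hpre]
    _ = ENNReal.ofReal (c⁻¹ ^ n) * ∫⁻ y in (fun z => x + c • (z - x)) '' A, g y ∂volume := by
        rw [aux_map_dil x c hc, Measure.restrict_smul, lintegral_smul_measure, himg, smul_eq_mul]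

/-- Upper bound for the measure of a centered ball. -/
lemma aux_ballA (w₀ : ℝ → ℝ) (β : ℝ) (hw : ∀ r : ℝ, 0 < r → 0 < w₀ r) (hβ : 1 ≤ β)
    (hdyad : ∀ R : ℝ, 0 < R → ∀ s ∈ Set.Icc R (2 * R), ∀ t ∈ Set.Icc R (2 * R),
      w₀ s ≤ β * w₀ t)
    {n : ℕ} (hn1 : 1 ≤ n) (hnβ : 2 * β ≤ 2 ^ n) (R : ℝ) (hR : 0 < R) :
    ∫⁻ y in ball (0 : EuclideanSpace ℝ (Fin n)) R, ENNReal.ofReal (w₀ ‖y‖)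
      ≤ ENNReal.ofReal (2 * β * w₀ R) * volume (ball (0 : EuclideanSpace ℝ (Fin n)) R) := by
  have hβ0 : (0:ℝ) < β := lt_of_lt_of_le one_pos hβ
  have hw0R : 0 < w₀ R := hw R hR
  haveI : Nontrivial (EuclideanSpace ℝ (Fin n)) := by
    refine ⟨⟨EuclideanSpace.single ⟨0, hn1⟩ (1:ℝ), 0, ?_⟩⟩
    intro h; have := congrArg (fun v => v ⟨0, hn1⟩) h; simp at this
  set D : ℕ → Set (EuclideanSpace ℝ (Fin n)) := fun j =>
    ball 0 ((2:ℝ)⁻¹ ^ j * R) \ ball 0 ((2:ℝ)⁻¹ ^ (j+1) * R) with hD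
  have hcover : ball (0 : EuclideanSpace ℝ (Fin n)) R ⊆ {0} ∪ ⋃ j, D j := by
    intro y hy
    rcases eq_or_ne y 0 with rfl | hne
    · exact Or.inl rfl
    · right
      have hy0 : 0 < ‖y‖ := norm_pos_iff.mpr hne
      have hyR : ‖y‖ < R := by simpa [mem_ball_zero_iff] using hy
      have hex : ∃ k : ℕ, R ≤ 2 ^ k * ‖y‖ := by
        obtain ⟨k, hk⟩ := pow_unbounded_of_one_lt (R / ‖y‖) (one_lt_two (α := ℝ))
        exact ⟨k, by rw [div_lt_iff₀ hy0] at hk; linarith⟩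
      have hk₀ := Nat.find_spec hex
      have hk0pos : Nat.find hex ≠ 0 := by
        intro h0; rw [h0] at hk₀; simp at hk₀; linarith
      obtain ⟨j, hj⟩ := Nat.exists_eq_succ_of_ne_zero hk0pos
      have hmin : ¬ (R ≤ 2 ^ j * ‖y‖) := Nat.find_min hex (by omega)
      push_neg at hmin
      rw [hj] at hk₀
      refine mem_iUnion.2 ⟨j, ?_, ?_⟩
      · rw [mem_ball_zero_iff, inv_pow, inv_mul_eq_div, lt_div_iff₀ (by positivity)]
        linarith [hmin]
      · rw [mem_ball_zero_iff]
        push_neg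
        rw [inv_pow, inv_mul_eq_div, div_le_iff₀ (by positivity)]
        simp only [Nat.succ_eq_add_one] at hk₀
        nlinarith [hk₀]
  have h0 : ∫⁻ y in ({0} : Set (EuclideanSpace ℝ (Fin n))), ENNReal.ofReal (w₀ ‖y‖) = 0 := by
    have hz : volume ({0} : Set (EuclideanSpace ℝ (Fin n))) = 0 := measure_singleton 0
    exact setLIntegral_measure_zero _ _ hz
  have hterm : ∀ j : ℕ, ∫⁻ y in D j, ENNReal.ofReal (w₀ ‖y‖)
      ≤ ENNReal.ofReal (β * w₀ R * (2:ℝ)⁻¹ ^ j)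
          * volume (ball (0 : EuclideanSpace ℝ (Fin n)) R) := by
    intro j
    have hDj : MeasurableSet (D j) := measurableSet_ball.diff measurableSet_ball
    have hpt : ∀ y ∈ D j, ENNReal.ofReal (w₀ ‖y‖) ≤ ENNReal.ofReal (β ^ (j+1) * w₀ R) := by
      intro y hy
      obtain ⟨hy1, hy2⟩ := hy
      rw [mem_ball_zero_iff] at hy1
      have hy2' : (2:ℝ)⁻¹ ^ (j+1) * R ≤ ‖y‖ := by
        by_contra hcon
        exact hy2 (mem_ball_zero_iff.mpr (by linarith))
      have hy0 : 0 < ‖y‖ := lt_of_lt_of_le (by positivity) hy2'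
      have hyR : ‖y‖ ≤ R := by
        have h2j : (2:ℝ)⁻¹ ^ j ≤ 1 := pow_le_one₀ (by norm_num) (by norm_num)
        nlinarith
      have hR2 : R ≤ 2 ^ (j+1) * ‖y‖ := by
        rw [inv_pow, inv_mul_eq_div, div_le_iff₀ (by positivity)] at hy2'
        nlinarith [hy2']
      have := (aux_dyad_chain w₀ β hw hβ hdyad (j+1) ‖y‖ R hy0 hyR hR2).2
      exact ENNReal.ofReal_le_ofReal this
    have hvol : volume (D j) ≤ ENNReal.ofReal (((2:ℝ)⁻¹ ^ j) ^ n)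
        * volume (ball (0 : EuclideanSpace ℝ (Fin n)) R) := by
      calc volume (D j) ≤ volume (ball (0 : EuclideanSpace ℝ (Fin n)) ((2:ℝ)⁻¹ ^ j * R)) :=
            measure_mono Set.diff_subset
        _ = ENNReal.ofReal (((2:ℝ)⁻¹ ^ j) ^ Module.finrank ℝ (EuclideanSpace ℝ (Fin n)))
              * volume (ball (0 : EuclideanSpace ℝ (Fin n)) R) :=
            Measure.addHaar_ball_mul_of_pos volume 0 (by positivity) R
        _ = ENNReal.ofReal (((2:ℝ)⁻¹ ^ j) ^ n)
              * volume (ball (0 : EuclideanSpace ℝ (Fin n)) R) := by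
            rw [finrank_euclideanSpace_fin]
    have hreal : β ^ (j+1) * w₀ R * ((2:ℝ)⁻¹ ^ j) ^ n ≤ β * w₀ R * (2:ℝ)⁻¹ ^ j := by
      have hq : β * (2:ℝ)⁻¹ ^ n ≤ 2⁻¹ := by
        rw [inv_pow]
        rw [mul_inv_le_iff₀ (by positivity)]
        have : (2:ℝ)⁻¹ * 2 ^ n = 2 ^ n / 2 := by ring
        rw [this, le_div_iff₀ (by norm_num)]
        linarith
      have hqj : (β * (2:ℝ)⁻¹ ^ n) ^ j ≤ ((2:ℝ)⁻¹) ^ j :=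
        pow_le_pow_left₀ (by positivity) hq j
      calc β ^ (j+1) * w₀ R * ((2:ℝ)⁻¹ ^ j) ^ n
          = (β * w₀ R) * (β * (2:ℝ)⁻¹ ^ n) ^ j := by ring
        _ ≤ (β * w₀ R) * ((2:ℝ)⁻¹) ^ j :=
            mul_le_mul_of_nonneg_left hqj (by positivity)
        _ = β * w₀ R * (2:ℝ)⁻¹ ^ j := by ring
    calc ∫⁻ y in D j, ENNReal.ofReal (w₀ ‖y‖)
        ≤ ∫⁻ _ in D j, ENNReal.ofReal (β ^ (j+1) * w₀ R) := setLIntegral_mono' hDj hpt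
      _ = ENNReal.ofReal (β ^ (j+1) * w₀ R) * volume (D j) := setLIntegral_const _ _
      _ ≤ ENNReal.ofReal (β ^ (j+1) * w₀ R) * (ENNReal.ofReal (((2:ℝ)⁻¹ ^ j) ^ n)
            * volume (ball (0 : EuclideanSpace ℝ (Fin n)) R)) :=
          mul_le_mul_right hvol _
      _ = ENNReal.ofReal (β ^ (j+1) * w₀ R * ((2:ℝ)⁻¹ ^ j) ^ n)
            * volume (ball (0 : EuclideanSpace ℝ (Fin n)) R) := by
          rw [← mul_assoc, ← ENNReal.ofReal_mul (by positivity)]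
      _ ≤ ENNReal.ofReal (β * w₀ R * (2:ℝ)⁻¹ ^ j)
            * volume (ball (0 : EuclideanSpace ℝ (Fin n)) R) :=
          mul_le_mul_left (ENNReal.ofReal_le_ofReal hreal) _
  calc ∫⁻ y in ball (0 : EuclideanSpace ℝ (Fin n)) R, ENNReal.ofReal (w₀ ‖y‖)
      ≤ ∫⁻ y in ({0} : Set (EuclideanSpace ℝ (Fin n))) ∪ ⋃ j, D j,
          ENNReal.ofReal (w₀ ‖y‖) := lintegral_mono_set hcover
    _ ≤ (∫⁻ y in ({0} : Set (EuclideanSpace ℝ (Fin n))), ENNReal.ofReal (w₀ ‖y‖))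
          + ∫⁻ y in ⋃ j, D j, ENNReal.ofReal (w₀ ‖y‖) := lintegral_union_le _ _ _
    _ = ∫⁻ y in ⋃ j, D j, ENNReal.ofReal (w₀ ‖y‖) := by rw [h0, zero_add]
    _ ≤ ∑' j, ∫⁻ y in D j, ENNReal.ofReal (w₀ ‖y‖) := lintegral_iUnion_le _ _
    _ ≤ ∑' j, ENNReal.ofReal (β * w₀ R * (2:ℝ)⁻¹ ^ j)
          * volume (ball (0 : EuclideanSpace ℝ (Fin n)) R) := ENNReal.tsum_le_tsum hterm
    _ = ∑' j, (ENNReal.ofReal (β * w₀ R) * volume (ball (0 : EuclideanSpace ℝ (Fin n)) R))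
          * (2:ℝ≥0∞)⁻¹ ^ j := by
        congr 1; funext j
        rw [ENNReal.ofReal_mul (by positivity), ENNReal.ofReal_pow (by norm_num)]
        have h2 : ENNReal.ofReal ((2:ℝ)⁻¹) = (2:ℝ≥0∞)⁻¹ := by
          rw [ENNReal.ofReal_inv_of_pos (by norm_num)]
          norm_num
        rw [h2]; ring
    _ = (ENNReal.ofReal (β * w₀ R) * volume (ball (0 : EuclideanSpace ℝ (Fin n)) R))
          * ∑' j : ℕ, (2:ℝ≥0∞)⁻¹ ^ j := ENNReal.tsum_mul_left
    _ = (ENNReal.ofReal (β * w₀ R) * volume (ball (0 : EuclideanSpace ℝ (Fin n)) R)) * 2 := by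
        rw [ENNReal.tsum_geometric, ENNReal.one_sub_inv_two, inv_inv]
    _ = ENNReal.ofReal (2 * β * w₀ R) * volume (ball (0 : EuclideanSpace ℝ (Fin n)) R) := by
        have h2 : (2:ℝ) * β * w₀ R = 2 * (β * w₀ R) := by ring
        rw [h2, ENNReal.ofReal_mul (by norm_num : (0:ℝ) ≤ 2), ENNReal.ofReal_ofNat]
        ring
  
/-- Lower bound for the weighted measure of a ball not too far from the origin. -/
lemma aux_ballB (w₀ : ℝ → ℝ) (β : ℝ) (hw : ∀ r : ℝ, 0 < r → 0 < w₀ r) (hβ : 1 ≤ β)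
    (hdyad : ∀ R : ℝ, 0 < R → ∀ s ∈ Set.Icc R (2 * R), ∀ t ∈ Set.Icc R (2 * R),
      w₀ s ≤ β * w₀ t)
    {n : ℕ} (hn1 : 1 ≤ n) (R : ℝ) (hR : 0 < R) (x : EuclideanSpace ℝ (Fin n))
    (hx : ‖x‖ ≤ 2 * R) :
    ENNReal.ofReal (w₀ R) * volume (ball (0 : EuclideanSpace ℝ (Fin n)) R)
      ≤ ENNReal.ofReal (2 * β ^ 8) * ∫⁻ y in ball x R, ENNReal.ofReal (w₀ ‖y‖) := by
  have hβ0 : (0:ℝ) < β := lt_of_lt_of_le one_pos hβ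
  set D : Set (EuclideanSpace ℝ (Fin n)) := ball x R \ ball 0 ((4:ℝ)⁻¹ * R) with hDdef
  have hDmeas : MeasurableSet D := measurableSet_ball.diff measurableSet_ball
  -- step 1 : volume (ball 0 R) ≤ 2 * volume D
  have hvol : volume (ball (0 : EuclideanSpace ℝ (Fin n)) R) ≤ 2 * volume D := by
    have hsub : ball x R ⊆ D ∪ ball 0 ((4:ℝ)⁻¹ * R) := by
      intro y hy
      by_cases h : y ∈ ball (0 : EuclideanSpace ℝ (Fin n)) ((4:ℝ)⁻¹ * R)
      · exact Or.inr h
      · exact Or.inl ⟨hy, h⟩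
    have h1 : volume (ball x R) ≤ volume D + volume (ball (0 : EuclideanSpace ℝ (Fin n)) ((4:ℝ)⁻¹ * R)) :=
      le_trans (measure_mono hsub) (measure_union_le _ _)
    have h2 : volume (ball x R) = volume (ball (0 : EuclideanSpace ℝ (Fin n)) R) :=
      Measure.addHaar_ball_center volume x R
    have h3 : volume (ball (0 : EuclideanSpace ℝ (Fin n)) ((4:ℝ)⁻¹ * R))
        = ENNReal.ofReal ((4:ℝ)⁻¹ ^ n) * volume (ball (0 : EuclideanSpace ℝ (Fin n)) R) := by
      rw [Measure.addHaar_ball_mul_of_pos volume 0 (by norm_num) R, finrank_euclideanSpace_fin]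
    have h4 : ENNReal.ofReal ((4:ℝ)⁻¹ ^ n) ≤ 2⁻¹ := by
      have : ((4:ℝ)⁻¹) ^ n ≤ 2⁻¹ := by
        calc ((4:ℝ)⁻¹) ^ n ≤ (4:ℝ)⁻¹ ^ 1 := pow_le_pow_of_le_one (by norm_num) (by norm_num) hn1
          _ = (4:ℝ)⁻¹ := pow_one _
          _ ≤ 2⁻¹ := by norm_num
      calc ENNReal.ofReal ((4:ℝ)⁻¹ ^ n) ≤ ENNReal.ofReal (2:ℝ)⁻¹ := ENNReal.ofReal_le_ofReal this
        _ = 2⁻¹ := by rw [ENNReal.ofReal_inv_of_pos (by norm_num)]; norm_num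
    set V := volume (ball (0 : EuclideanSpace ℝ (Fin n)) R) with hV
    have hVfin : V ≠ ⊤ := (measure_ball_lt_top).ne
    have h5 : V ≤ volume D + 2⁻¹ * V := by
      calc V = volume (ball x R) := h2.symm
        _ ≤ volume D + volume (ball (0 : EuclideanSpace ℝ (Fin n)) ((4:ℝ)⁻¹ * R)) := h1
        _ ≤ volume D + 2⁻¹ * V := by
            rw [h3]; exact add_le_add_right (mul_le_mul_left h4 _) _
    have h6 : 2⁻¹ * V + 2⁻¹ * V = V := by
      rw [← add_mul]
      norm_num [ENNReal.inv_two_add_inv_two]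
    have h7 : 2⁻¹ * V ≤ volume D := by
      have h5' : 2⁻¹ * V + 2⁻¹ * V ≤ volume D + 2⁻¹ * V := by rw [h6]; exact h5
      exact (ENNReal.add_le_add_iff_right
        (ENNReal.mul_ne_top (by norm_num) hVfin)).mp h5'
    calc V = 2 * (2⁻¹ * V) := by
          rw [← mul_assoc, ENNReal.mul_inv_cancel (by norm_num) (by norm_num), one_mul]
      _ ≤ 2 * volume D := mul_le_mul_right h7 _
  -- step 2 : pointwise comparison on D
  have hpt : ∀ y ∈ D, w₀ R ≤ β ^ 8 * w₀ ‖y‖ := by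
    intro y hy
    obtain ⟨hy1, hy2⟩ := hy
    have hy2' : (4:ℝ)⁻¹ * R ≤ ‖y‖ := by
      by_contra hcon
      exact hy2 (mem_ball_zero_iff.mpr (by linarith))
    have hy1' : ‖y - x‖ < R := by rwa [mem_ball_iff_norm] at hy1
    have hyup : ‖y‖ ≤ 2 ^ 4 * ((4:ℝ)⁻¹ * R) := by
      have h1 : ‖y‖ ≤ ‖y - x‖ + ‖x‖ := by
        calc ‖y‖ = ‖y - x + x‖ := by congr 1; abel
          _ ≤ ‖y - x‖ + ‖x‖ := norm_add_le _ _
      nlinarith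
    have hq1 : (4:ℝ)⁻¹ * R ≤ R := by nlinarith
    have hRup : R ≤ 2 ^ 4 * ((4:ℝ)⁻¹ * R) := by nlinarith
    exact aux_dyad_icc w₀ β hw hβ hdyad 4 ((4:ℝ)⁻¹ * R) R ‖y‖ (by positivity)
      ⟨hq1, hRup⟩ ⟨hy2', hyup⟩
  -- step 3 : assemble
  have h8 : ENNReal.ofReal (w₀ R) * volume D
      ≤ ENNReal.ofReal (β ^ 8) * ∫⁻ y in ball x R, ENNReal.ofReal (w₀ ‖y‖) := by
    calc ENNReal.ofReal (w₀ R) * volume D = ∫⁻ _ in D, ENNReal.ofReal (w₀ R) :=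
          (setLIntegral_const _ _).symm
      _ ≤ ∫⁻ y in D, ENNReal.ofReal (β ^ 8) * ENNReal.ofReal (w₀ ‖y‖) := by
          apply setLIntegral_mono' hDmeas
          intro y hy
          rw [← ENNReal.ofReal_mul (by positivity)]
          exact ENNReal.ofReal_le_ofReal (hpt y hy)
      _ = ENNReal.ofReal (β ^ 8) * ∫⁻ y in D, ENNReal.ofReal (w₀ ‖y‖) :=
          lintegral_const_mul' _ _ ENNReal.ofReal_ne_top
      _ ≤ ENNReal.ofReal (β ^ 8) * ∫⁻ y in ball x R, ENNReal.ofReal (w₀ ‖y‖) :=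
          mul_le_mul_right (lintegral_mono_set Set.diff_subset) _
  calc ENNReal.ofReal (w₀ R) * volume (ball (0 : EuclideanSpace ℝ (Fin n)) R)
      ≤ ENNReal.ofReal (w₀ R) * (2 * volume D) := mul_le_mul_right hvol _
    _ = 2 * (ENNReal.ofReal (w₀ R) * volume D) := by ring
    _ ≤ 2 * (ENNReal.ofReal (β ^ 8) * ∫⁻ y in ball x R, ENNReal.ofReal (w₀ ‖y‖)) :=
        mul_le_mul_right h8 _
    _ = ENNReal.ofReal (2 * β ^ 8) * ∫⁻ y in ball x R, ENNReal.ofReal (w₀ ‖y‖) := by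
        rw [ENNReal.ofReal_mul (by norm_num : (0:ℝ) ≤ 2), ENNReal.ofReal_ofNat, mul_assoc]

/-- If `w₀ : (0,∞) → (0,∞)` is essentially constant over dyadic intervals with constant
`β`, then the radial measures `dμ = w₀(|x|)dx` are uniformly `n`-micro-doubling for all
sufficiently large `n`: there exist `N` and `K` (depending only on `β`) such that for all
`n ≥ N`, `x ∈ ℝⁿ` and `R > 0`, `μ(B(x,(1+1/n)R)) ≤ K μ(B(x,R))`. -/
theorem stmt_9 (w₀ : ℝ → ℝ) (hw : ∀ r : ℝ, 0 < r → 0 < w₀ r)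
    (β : ℝ) (hβ : 1 ≤ β)
    (hdyad : ∀ R : ℝ, 0 < R → ∀ s ∈ Set.Icc R (2 * R), ∀ t ∈ Set.Icc R (2 * R),
      w₀ s ≤ β * w₀ t) :
    ∃ N : ℕ, ∃ K : ℝ≥0∞, K ≠ ∞ ∧
      ∀ n : ℕ, N ≤ n → ∀ (x : EuclideanSpace ℝ (Fin n)) (R : ℝ), 0 < R →
        ∫⁻ y in ball x ((1 + 1 / (n : ℝ)) * R), ENNReal.ofReal (w₀ ‖y‖)
          ≤ K * ∫⁻ y in ball x R, ENNReal.ofReal (w₀ ‖y‖) := by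
  have hβ0 : (0:ℝ) < β := lt_of_lt_of_le one_pos hβ
  obtain ⟨m, hm⟩ := pow_unbounded_of_one_lt β (one_lt_two (α := ℝ))
  refine ⟨m + 3, ENNReal.ofReal (3 * β ^ 4 + 4 * β ^ 9), ENNReal.ofReal_ne_top, ?_⟩
  intro n hn x R hR
  have hn3 : 3 ≤ n := le_trans (by omega) hn
  have hn1 : 1 ≤ n := by omega
  have hn0 : (0:ℝ) < (n : ℝ) := by exact_mod_cast Nat.lt_of_lt_of_le (by norm_num) hn3
  set δ : ℝ := 1 / (n : ℝ) with hδdef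
  have hδpos : 0 < δ := by positivity
  have hδ3 : 3 * δ ≤ 1 := by
    rw [hδdef]
    rw [mul_one_div, div_le_one hn0]
    exact_mod_cast hn3
  have hδ2 : 2 * δ ≤ 1 := by linarith
  have hδ1 : δ ≤ 1 := by linarith
  have hnβ : 2 * β ≤ 2 ^ n := by
    have h1 : β ≤ (2:ℝ) ^ (n-1) := le_trans hm.le (pow_le_pow_right₀ one_le_two (by omega))
    have h2 : (2:ℝ) ^ n = 2 ^ (n-1) * 2 := by
      rw [← pow_succ]
      congr 1
      omega
    rw [h2]; linarith
  set S₀ : Set (EuclideanSpace ℝ (Fin n)) := ball 0 (2 * δ * R) with hS₀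
  set A : Set (EuclideanSpace ℝ (Fin n)) := ball x ((1 + δ) * R) \ S₀ with hA
  have hAmeas : MeasurableSet A := measurableSet_ball.diff measurableSet_ball
  -- Part 1
  have part1 : ∫⁻ y in A, ENNReal.ofReal (w₀ ‖y‖)
      ≤ ENNReal.ofReal (3 * β ^ 4) * ∫⁻ y in ball x R, ENNReal.ofReal (w₀ ‖y‖) := by
    set c : ℝ := (1 + δ)⁻¹ with hc
    have hcpos : 0 < c := by positivity
    have hc1 : c * (1 + δ) = 1 := inv_mul_cancel₀ (by positivity)
    have hcle1 : c ≤ 1 := by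
      rw [hc]
      have h1δ : (0:ℝ) < 1 + δ := by linarith
      rw [inv_le_one₀ h1δ]
      linarith
    have key : ∀ z ∈ A, ENNReal.ofReal (w₀ ‖z‖)
        ≤ ENNReal.ofReal (β ^ 4) * ENNReal.ofReal (w₀ ‖x + c • (z - x)‖) := by
      intro z hz
      obtain ⟨hz1, hz2⟩ := hz
      have hz1' : ‖z - x‖ < (1 + δ) * R := by rwa [mem_ball_iff_norm] at hz1
      have hz2' : 2 * δ * R ≤ ‖z‖ := by
        by_contra hcon
        exact hz2 (mem_ball_zero_iff.mpr (by linarith))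
      have hz0 : 0 < ‖z‖ := lt_of_lt_of_le (by positivity) hz2'
      set φz := x + c • (z - x) with hφz
      have hdiff : φz - z = (c - 1) • (z - x) := by
        rw [hφz, sub_smul, one_smul]
        abel
      have hdist : ‖φz - z‖ ≤ δ * R := by
        rw [hdiff, norm_smul, Real.norm_eq_abs, abs_of_nonpos (by linarith)]
        have h1 : -(c - 1) = 1 - c := by ring
        rw [h1]
        have h2 : (1 - c) * (1 + δ) = δ := by
          have : (1 - c) * (1 + δ) = (1 + δ) - c * (1 + δ) := by ring
          rw [this, hc1]; ring
        calc (1 - c) * ‖z - x‖ ≤ (1 - c) * ((1 + δ) * R) :=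
              mul_le_mul_of_nonneg_left hz1'.le (by linarith)
          _ = δ * R := by rw [← mul_assoc, h2]
      have hδRz : δ * R ≤ ‖z‖ / 2 := by linarith
      have hφlow : ‖z‖ / 2 ≤ ‖φz‖ := by
        have h := norm_sub_norm_le z φz
        have h2 : ‖z - φz‖ = ‖φz - z‖ := norm_sub_rev z φz
        linarith
      have hφhigh : ‖φz‖ ≤ 2 * ‖z‖ := by
        have h := norm_le_norm_add_norm_sub' φz z
        have h2 : ‖φz - z‖ ≤ ‖z‖ / 2 := le_trans hdist hδRz
        calc ‖φz‖ ≤ ‖z‖ + ‖φz - z‖ := by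
              have := norm_sub_le_norm_sub_add_norm_sub φz z 0
              calc ‖φz‖ = ‖φz - 0‖ := by simp
                _ ≤ ‖φz - z‖ + ‖z - 0‖ := norm_sub_le_norm_sub_add_norm_sub φz z 0
                _ = ‖z‖ + ‖φz - z‖ := by simp [add_comm]
          _ ≤ 2 * ‖z‖ := by linarith
      have hcomp : w₀ ‖z‖ ≤ β ^ (2 * 2) * w₀ ‖φz‖ := by
        apply aux_dyad_icc w₀ β hw hβ hdyad 2 (‖z‖ / 2) ‖z‖ ‖φz‖ (by positivity)
        · constructor
          · linarith
          · norm_num; linarith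
        · constructor
          · exact hφlow
          · norm_num; linarith
      have hcomp' : w₀ ‖z‖ ≤ β ^ 4 * w₀ ‖φz‖ := by norm_num at hcomp; exact hcomp
      calc ENNReal.ofReal (w₀ ‖z‖) ≤ ENNReal.ofReal (β ^ 4 * w₀ ‖φz‖) :=
            ENNReal.ofReal_le_ofReal hcomp'
        _ = ENNReal.ofReal (β ^ 4) * ENNReal.ofReal (w₀ ‖φz‖) :=
            ENNReal.ofReal_mul (by positivity)
    have himg : (fun z => x + c • (z - x)) '' A ⊆ ball x R := by
      rintro - ⟨z, hz, rfl⟩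
      obtain ⟨hzb, -⟩ := hz
      have hz1' : ‖z - x‖ < (1 + δ) * R := by rwa [mem_ball_iff_norm] at hzb
      rw [mem_ball_iff_norm]
      have : x + c • (z - x) - x = c • (z - x) := by abel
      rw [this, norm_smul, Real.norm_eq_abs, abs_of_pos hcpos]
      calc c * ‖z - x‖ < c * ((1 + δ) * R) := by
            exact mul_lt_mul_of_pos_left hz1' hcpos
        _ = R := by rw [← mul_assoc, hc1, one_mul]
    have hexp : c⁻¹ ^ n ≤ 3 := by
      have hcinv : c⁻¹ = 1 + δ := by rw [hc, inv_inv]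
      rw [hcinv]
      have h1 : (1:ℝ) + δ ≤ Real.exp δ := by
        have := Real.add_one_le_exp δ; linarith
      have h2 : ((1:ℝ) + δ) ^ n ≤ Real.exp δ ^ n := pow_le_pow_left₀ (by positivity) h1 n
      have h3 : Real.exp δ ^ n = Real.exp ((n:ℝ) * δ) := (Real.exp_nat_mul _ n).symm
      have h4 : (n:ℝ) * δ = 1 := by
        rw [hδdef]; field_simp
      have h5 := Real.exp_one_lt_d9
      rw [h3, h4] at h2
      linarith
    calc ∫⁻ y in A, ENNReal.ofReal (w₀ ‖y‖)
        ≤ ∫⁻ z in A, ENNReal.ofReal (β ^ 4) * ENNReal.ofReal (w₀ ‖x + c • (z - x)‖) :=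
          setLIntegral_mono' hAmeas key
      _ = ENNReal.ofReal (β ^ 4) * ∫⁻ z in A, ENNReal.ofReal (w₀ ‖x + c • (z - x)‖) :=
          lintegral_const_mul' _ _ ENNReal.ofReal_ne_top
      _ = ENNReal.ofReal (β ^ 4) * (ENNReal.ofReal (c⁻¹ ^ n)
            * ∫⁻ y in (fun z => x + c • (z - x)) '' A, ENNReal.ofReal (w₀ ‖y‖)) := by
          rw [aux_cov x c hcpos hAmeas (fun y => ENNReal.ofReal (w₀ ‖y‖))]
      _ ≤ ENNReal.ofReal (β ^ 4) * (ENNReal.ofReal (c⁻¹ ^ n)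
            * ∫⁻ y in ball x R, ENNReal.ofReal (w₀ ‖y‖)) :=
          mul_le_mul_right (mul_le_mul_right (lintegral_mono_set himg) _) _
      _ = ENNReal.ofReal (β ^ 4 * c⁻¹ ^ n) * ∫⁻ y in ball x R, ENNReal.ofReal (w₀ ‖y‖) := by
          rw [← mul_assoc, ← ENNReal.ofReal_mul (by positivity)]
      _ ≤ ENNReal.ofReal (3 * β ^ 4) * ∫⁻ y in ball x R, ENNReal.ofReal (w₀ ‖y‖) := by
          apply mul_le_mul_left
          apply ENNReal.ofReal_le_ofReal
          nlinarith [pow_pos hβ0 4]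
  -- Part 2
  have part2 : ∫⁻ y in ball x ((1 + δ) * R) ∩ S₀, ENNReal.ofReal (w₀ ‖y‖)
      ≤ ENNReal.ofReal (4 * β ^ 9) * ∫⁻ y in ball x R, ENNReal.ofReal (w₀ ‖y‖) := by
    rcases lt_or_ge ‖x‖ (2 * R) with hx | hx
    · have hsub : ball x ((1 + δ) * R) ∩ S₀ ⊆ ball (0 : EuclideanSpace ℝ (Fin n)) R := by
        rintro y ⟨-, hy2⟩
        rw [hS₀, mem_ball_zero_iff] at hy2
        rw [mem_ball_zero_iff]
        nlinarith
      calc ∫⁻ y in ball x ((1 + δ) * R) ∩ S₀, ENNReal.ofReal (w₀ ‖y‖)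
          ≤ ∫⁻ y in ball (0 : EuclideanSpace ℝ (Fin n)) R, ENNReal.ofReal (w₀ ‖y‖) :=
            lintegral_mono_set hsub
        _ ≤ ENNReal.ofReal (2 * β * w₀ R) * volume (ball (0 : EuclideanSpace ℝ (Fin n)) R) :=
            aux_ballA w₀ β hw hβ hdyad hn1 hnβ R hR
        _ = ENNReal.ofReal (2 * β) * (ENNReal.ofReal (w₀ R)
              * volume (ball (0 : EuclideanSpace ℝ (Fin n)) R)) := by
            rw [← mul_assoc, ← ENNReal.ofReal_mul (by positivity)]
        _ ≤ ENNReal.ofReal (2 * β) * (ENNReal.ofReal (2 * β ^ 8)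
              * ∫⁻ y in ball x R, ENNReal.ofReal (w₀ ‖y‖)) :=
            mul_le_mul_right (aux_ballB w₀ β hw hβ hdyad hn1 R hR x hx.le) _
        _ = ENNReal.ofReal (4 * β ^ 9) * ∫⁻ y in ball x R, ENNReal.ofReal (w₀ ‖y‖) := by
            rw [← mul_assoc, ← ENNReal.ofReal_mul (by positivity)]
            have : 2 * β * (2 * β ^ 8) = 4 * β ^ 9 := by ring
            rw [this]
    · have hempty : ball x ((1 + δ) * R) ∩ S₀ = ∅ := by
        ext y
        simp only [Set.mem_inter_iff, Set.mem_empty_iff_false, iff_false, not_and]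
        intro h1 h2
        rw [mem_ball_iff_norm] at h1
        rw [hS₀, mem_ball_zero_iff] at h2
        have hxy : ‖x‖ ≤ ‖y - x‖ + ‖y‖ := by
          calc ‖x‖ = ‖(x - y) + y‖ := by congr 1; abel
            _ ≤ ‖x - y‖ + ‖y‖ := norm_add_le _ _
            _ = ‖y - x‖ + ‖y‖ := by rw [norm_sub_rev]
        nlinarith
      rw [hempty]
      simp
  -- assemble
  have hsplit : ball x ((1 + δ) * R) = A ∪ (ball x ((1 + δ) * R) ∩ S₀) :=
    (Set.diff_union_inter _ _).symm
  have h1n : (1 : ℝ) + 1 / (n:ℝ) = 1 + δ := by rw [hδdef]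
  rw [h1n]
  calc ∫⁻ y in ball x ((1 + δ) * R), ENNReal.ofReal (w₀ ‖y‖)
      = ∫⁻ y in A ∪ (ball x ((1 + δ) * R) ∩ S₀), ENNReal.ofReal (w₀ ‖y‖) := by
        rw [← hsplit]
    _ ≤ (∫⁻ y in A, ENNReal.ofReal (w₀ ‖y‖))
          + ∫⁻ y in ball x ((1 + δ) * R) ∩ S₀, ENNReal.ofReal (w₀ ‖y‖) :=
        lintegral_union_le _ _ _
    _ ≤ ENNReal.ofReal (3 * β ^ 4) * (∫⁻ y in ball x R, ENNReal.ofReal (w₀ ‖y‖))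
          + ENNReal.ofReal (4 * β ^ 9) * ∫⁻ y in ball x R, ENNReal.ofReal (w₀ ‖y‖) :=
        add_le_add part1 part2
    _ = ENNReal.ofReal (3 * β ^ 4 + 4 * β ^ 9) * ∫⁻ y in ball x R, ENNReal.ofReal (w₀ ‖y‖) := by
        rw [ENNReal.ofReal_add (by positivity) (by positivity), add_mul]
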